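/- Convex progress lower bound: suppose the minimum value of F is 0 and is attained at some point, let Γ > 0, let x ∈ ℝⁿ, and let ℛ := min_{p* ∈ P*} ‖x − p*‖ where P* is the (nonempty, closed) set of minimizers of F. If ℛ > 0 then Σ_{k=1}^n Ŵ(∇_k f(x), x_k, Γ, Ψ_k) ≥ min{ 1/2 , F(x)/(2Γℛ²) }·F(x). -/
import Mathlib


/-- The proximal function `W(d, g, x, Γ, Ψ) = -g·d - (Γ/2)·d² + Ψ(x) - Ψ(x + d)`. -/
noncomputable def W (d g x Γ : ℝ) (Ψ : ℝ → ℝ) : ℝ :=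
  -(g * d) - Γ / 2 * d ^ 2 + Ψ x - Ψ (x + d)

/-- `Ŵ(g, x, Γ, Ψ) = sup_{d ∈ ℝ} W(d, g, x, Γ, Ψ)`. -/
noncomputable def What (g x Γ : ℝ) (Ψ : ℝ → ℝ) : ℝ := ⨆ d : ℝ, W d g x Γ Ψ

/-- The `j`-th partial derivative (coordinate of the gradient) of `f` at `x`. -/
noncomputable def grad {n : ℕ} (f : (Fin n → ℝ) → ℝ) (x : Fin n → ℝ) (j : Fin n) : ℝ :=
  fderiv ℝ f x (Pi.single j 1)

lemma psi_lin_bound (Ψ : ℝ → ℝ) (hΨ : ConvexOn ℝ Set.univ Ψ) (x d : ℝ) :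
    Ψ x - Ψ (x + d) ≤ (|Ψ (x+1) - Ψ x| + |Ψ x - Ψ (x-1)|) * |d| := by
  rcases lt_trichotomy d 0 with hd | hd | hd
  · have h := hΨ.slope_mono_adjacent (Set.mem_univ (x + d)) (Set.mem_univ (x + 1))
      (by linarith : x + d < x) (by linarith : x < x + 1)
    have h1 : (Ψ x - Ψ (x + d)) / (x - (x + d)) ≤ (Ψ (x+1) - Ψ x) / (x + 1 - x) := h
    have h2 : (Ψ x - Ψ (x + d)) / (-d) ≤ Ψ (x+1) - Ψ x := by
      simpa using h1
    have h3 : Ψ x - Ψ (x + d) ≤ (Ψ (x+1) - Ψ x) * (-d) := by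
      rw [div_le_iff₀ (by linarith : (0:ℝ) < -d)] at h2
      exact h2
    have h4 : |d| = -d := abs_of_neg hd
    have h5 : Ψ (x+1) - Ψ x ≤ |Ψ (x+1) - Ψ x| := le_abs_self _
    have h6 := mul_le_mul_of_nonneg_right h5 (by linarith : (0:ℝ) ≤ -d)
    have h7 := mul_nonneg (abs_nonneg (Ψ x - Ψ (x-1))) (by linarith : (0:ℝ) ≤ -d)
    rw [h4]
    nlinarith
  · simp [hd]
  · have h := hΨ.slope_mono_adjacent (Set.mem_univ (x - 1)) (Set.mem_univ (x + d))
      (by linarith : x - 1 < x) (by linarith : x < x + d)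
    have h1 : (Ψ x - Ψ (x-1)) / (x - (x - 1)) ≤ (Ψ (x + d) - Ψ x) / (x + d - x) := h
    have h2 : Ψ x - Ψ (x-1) ≤ (Ψ (x + d) - Ψ x) / d := by simpa using h1
    have h3 : (Ψ x - Ψ (x-1)) * d ≤ Ψ (x + d) - Ψ x := by
      rw [← le_div_iff₀ hd]; exact h2
    have h4 : |d| = d := abs_of_pos hd
    have h5 : -(Ψ x - Ψ (x-1)) ≤ |Ψ x - Ψ (x-1)| := neg_le_abs _
    have h6 := mul_le_mul_of_nonneg_right h5 hd.le
    have h7 := mul_nonneg (abs_nonneg (Ψ (x+1) - Ψ x)) hd.le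
    rw [h4]
    nlinarith

lemma W_bddAbove (Ψ : ℝ → ℝ) (hΨ : ConvexOn ℝ Set.univ Ψ) (g x Γ : ℝ) (hΓ : 0 < Γ) :
    BddAbove (Set.range fun d => W d g x Γ Ψ) := by
  set C : ℝ := |g| + |Ψ (x+1) - Ψ x| + |Ψ x - Ψ (x-1)| with hC
  refine ⟨C ^ 2 / (2 * Γ), ?_⟩
  rintro _ ⟨d, rfl⟩
  clear_value C
  have h1 := psi_lin_bound Ψ hΨ x d
  have h2 : -(g * d) ≤ |g| * |d| := by
    calc -(g * d) ≤ |g * d| := neg_le_abs _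
    _ = |g| * |d| := abs_mul g d
  have h3 : W d g x Γ Ψ ≤ C * |d| - Γ / 2 * d ^ 2 := by
    unfold W
    nlinarith [abs_nonneg g, abs_nonneg d]
  have h4 : C * |d| - Γ / 2 * d ^ 2 ≤ C ^ 2 / (2 * Γ) := by
    rw [le_div_iff₀ (by positivity : (0:ℝ) < 2 * Γ), ← sq_abs d]
    nlinarith [sq_nonneg (C - Γ * |d|)]
  linarith

lemma grad_lower {n : ℕ} (f : (Fin n → ℝ) → ℝ) (hf : Differentiable ℝ f)
    (hfc : ConvexOn ℝ Set.univ f) (x p : Fin n → ℝ) :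
    f x + ∑ k, grad f x k * (p k - x k) ≤ f p := by
  set v : Fin n → ℝ := fun k => p k - x k with hv
  set L := fderiv ℝ f x with hL
  have hsum : ∑ k, grad f x k * (p k - x k) = L v := by
    have hveq : v = ∑ k, v k • (Pi.single k (1:ℝ) : Fin n → ℝ) := by
      funext j
      simp [Pi.single_apply, Finset.sum_apply]
    rw [show L v = L (∑ k, v k • (Pi.single k (1:ℝ) : Fin n → ℝ)) by rw [← hveq]]
    rw [map_sum]
    simp only [map_smul, smul_eq_mul]
    exact Finset.sum_congr rfl fun k _ => by rw [grad]; ring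
  set φ : ℝ → ℝ := fun t => f (x + t • v) with hφ
  have hcurve : ∀ t : ℝ, HasDerivAt (fun t : ℝ => x + t • v) v t := by
    intro t
    simpa using (((hasDerivAt_id t).smul_const v).const_add x)
  have hφd : HasDerivAt φ (L v) 0 := by
    have h0 : x + (0:ℝ) • v = x := by simp
    have := (hf (x + (0:ℝ) • v)).hasFDerivAt.comp_hasDerivAt 0 (hcurve 0)
    rw [h0] at this
    exact this
  have hφc : ConvexOn ℝ Set.univ φ := by
    have hA := hfc.comp_affineMap (AffineMap.lineMap x (x + v) : ℝ →ᵃ[ℝ] (Fin n → ℝ))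
    have heq : (f ∘ (AffineMap.lineMap x (x + v) : ℝ →ᵃ[ℝ] (Fin n → ℝ))) = φ := by
      funext t
      simp [AffineMap.lineMap_apply, φ, add_comm]
    rw [heq, Set.preimage_univ] at hA
    exact hA
  have hslope := hφc.le_slope_of_hasDerivAt (Set.mem_univ 0) (Set.mem_univ 1) zero_lt_one hφd
  have hφ1 : φ 1 = f p := by
    have h : x + (1:ℝ) • v = p := by funext j; simp [v]
    show f (x + (1:ℝ) • v) = f p
    rw [h]
  have hφ0 : φ 0 = f x := by simp [φ]
  rw [slope_def_field] at hslope
  rw [hφ1, hφ0] at hslope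
  have : L v ≤ f p - f x := by
    simpa using hslope
  linarith [hsum ▸ this]

/-- Convex progress lower bound: if the minimum value of `F` is `0` and is attained,
`Γ > 0`, and `ℛ = min_{p* ∈ P*} ‖x - p*‖ > 0` (Euclidean distance from `x` to the set
of minimizers `P* = {p : F p = 0}`), then
`Σ_k Ŵ(∇_k f(x), x_k, Γ, Ψ_k) ≥ min{1/2, F(x)/(2Γℛ²)}·F(x)`. -/
theorem convex_progress {n : ℕ} (hn : 0 < n)
    (f : (Fin n → ℝ) → ℝ) (hf : Differentiable ℝ f) (hfc : ConvexOn ℝ Set.univ f)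
    (Ψ : Fin n → ℝ → ℝ) (hΨ : ∀ k, ConvexOn ℝ Set.univ (Ψ k))
    (F : (Fin n → ℝ) → ℝ) (hF : ∀ y, F y = f y + ∑ k, Ψ k (y k))
    (hFnonneg : ∀ y, 0 ≤ F y)
    (Γ : ℝ) (hΓpos : 0 < Γ) (x : Fin n → ℝ)
    (pstar : Fin n → ℝ) (hpstar : F pstar = 0)
    (R : ℝ) (hRdef : R = Real.sqrt (∑ k, (x k - pstar k) ^ 2))
    (hRmin : ∀ p : Fin n → ℝ, F p = 0 → R ≤ Real.sqrt (∑ k, (x k - p k) ^ 2))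
    (hRpos : 0 < R) :
    ∑ k, What (grad f x k) (x k) Γ (Ψ k) ≥
      min (1 / 2) (F x / (2 * Γ * R ^ 2)) * F x := by
  have hFx : 0 ≤ F x := hFnonneg x
  have hR2pos : 0 < R ^ 2 := by positivity
  have hΓR2 : 0 < Γ * R ^ 2 := by positivity
  -- β
  set β : ℝ := min 1 (F x / (Γ * R ^ 2)) with hβ
  have hβ0 : 0 ≤ β := le_min zero_le_one (by positivity)
  have hβ1 : β ≤ 1 := min_le_left _ _
  -- R² = ∑ (x k - pstar k)²
  have hR2 : R ^ 2 = ∑ k, (x k - pstar k) ^ 2 := by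
    rw [hRdef, Real.sq_sqrt (Finset.sum_nonneg fun k _ => sq_nonneg _)]
  set d : Fin n → ℝ := fun k => β * (pstar k - x k) with hd
  -- each What bounds W (d k)
  have hWhat : ∀ k, W (d k) (grad f x k) (x k) Γ (Ψ k) ≤ What (grad f x k) (x k) Γ (Ψ k) := by
    intro k
    exact le_ciSup (W_bddAbove (Ψ k) (hΨ k) (grad f x k) (x k) Γ hΓpos) (d k)
  have hstep1 : ∑ k, W (d k) (grad f x k) (x k) Γ (Ψ k) ≤
      ∑ k, What (grad f x k) (x k) Γ (Ψ k) :=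
    Finset.sum_le_sum fun k _ => hWhat k
  -- lower bound each W (d k)
  have hψk : ∀ k, Ψ k (x k + d k) ≤ (1 - β) * Ψ k (x k) + β * Ψ k (pstar k) := by
    intro k
    have harg : x k + d k = (1 - β) * x k + β * pstar k := by simp [d]; ring
    have := (hΨ k).2 (Set.mem_univ (x k)) (Set.mem_univ (pstar k))
      (by linarith : (0:ℝ) ≤ 1 - β) hβ0 (by ring)
    rw [harg]
    simpa [smul_eq_mul] using this
  have hterm : ∀ k, (-β) * (grad f x k * (pstar k - x k)) + (-(Γ/2) * β^2) * (x k - pstar k)^2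
      + β * (Ψ k (x k) - Ψ k (pstar k)) ≤ W (d k) (grad f x k) (x k) Γ (Ψ k) := by
    intro k
    have h1 := hψk k
    unfold W
    have hde : d k = β * (pstar k - x k) := rfl
    rw [hde]
    nlinarith [sq_nonneg β]
  have hstep2 : ∑ k, ((-β) * (grad f x k * (pstar k - x k)) + (-(Γ/2) * β^2) * (x k - pstar k)^2
      + β * (Ψ k (x k) - Ψ k (pstar k))) ≤ ∑ k, W (d k) (grad f x k) (x k) Γ (Ψ k) :=
    Finset.sum_le_sum fun k _ => hterm k
  have hsplit : ∑ k, ((-β) * (grad f x k * (pstar k - x k)) + (-(Γ/2) * β^2) * (x k - pstar k)^2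
      + β * (Ψ k (x k) - Ψ k (pstar k)))
      = (-β) * (∑ k, grad f x k * (pstar k - x k)) + (-(Γ/2) * β^2) * (∑ k, (x k - pstar k)^2)
        + β * ((∑ k, Ψ k (x k)) - ∑ k, Ψ k (pstar k)) := by
    simp only [Finset.sum_add_distrib, Finset.mul_sum, Finset.sum_sub_distrib, mul_sub]
  have hgrad := grad_lower f hf hfc x pstar
  -- key lower bound
  have hkey : β * F x - Γ/2 * β^2 * R^2 ≤ ∑ k, What (grad f x k) (x k) Γ (Ψ k) := by
    have h1 : β * (f x - f pstar) ≤ (-β) * (∑ k, grad f x k * (pstar k - x k)) := by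
      nlinarith [mul_le_mul_of_nonneg_left (by linarith [hgrad] :
        ∑ k, grad f x k * (pstar k - x k) ≤ f pstar - f x) hβ0]
    have hFxe : F x = f x + ∑ k, Ψ k (x k) := hF x
    have hFpe : f pstar + ∑ k, Ψ k (pstar k) = 0 := by
      have := hF pstar; rw [hpstar] at this; linarith
    have h2 : β * F x - Γ/2 * β^2 * R^2 ≤
        (-β) * (∑ k, grad f x k * (pstar k - x k)) + (-(Γ/2) * β^2) * (∑ k, (x k - pstar k)^2)
        + β * ((∑ k, Ψ k (x k)) - ∑ k, Ψ k (pstar k)) := by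
      rw [← hR2]
      nlinarith [h1]
    calc β * F x - Γ/2 * β^2 * R^2 ≤ _ := h2
      _ = ∑ k, ((-β) * (grad f x k * (pstar k - x k)) + (-(Γ/2) * β^2) * (x k - pstar k)^2
          + β * (Ψ k (x k) - Ψ k (pstar k))) := hsplit.symm
      _ ≤ ∑ k, W (d k) (grad f x k) (x k) Γ (Ψ k) := hstep2
      _ ≤ _ := hstep1
  -- final numeric argument
  have hfinal : min (1 / 2) (F x / (2 * Γ * R ^ 2)) * F x ≤ β * F x - Γ/2 * β^2 * R^2 := by
    rcases le_or_gt (F x) (Γ * R ^ 2) with hc | hc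
    · have hβeq : β = F x / (Γ * R ^ 2) := by
        rw [hβ]; exact min_eq_right (by rw [div_le_one hΓR2]; exact hc)
      have hmin : min (1 / 2) (F x / (2 * Γ * R ^ 2)) = F x / (2 * Γ * R ^ 2) := by
        apply min_eq_right
        rw [div_le_iff₀ (by positivity)]
        linarith
      rw [hβeq, hmin]
      have heq2 : F x / (Γ * R ^ 2) * F x - Γ / 2 * (F x / (Γ * R ^ 2)) ^ 2 * R ^ 2
          = F x / (2 * Γ * R ^ 2) * F x := by
        field_simp
        ring
      rw [heq2]
    · have hβeq : β = 1 := by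
        rw [hβ]; exact min_eq_left (by rw [le_div_iff₀ hΓR2]; linarith)
      have hmin : min (1 / 2) (F x / (2 * Γ * R ^ 2)) = 1 / 2 := by
        apply min_eq_left
        rw [le_div_iff₀ (by positivity)]
        linarith
      rw [hβeq, hmin]
      nlinarith
  linarith
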